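/- Let X be a real Banach space and P₁, P₂ : X → X continuous linear maps with P₁ + P₂ = id, P₁∘P₁ = P₁ and P₁∘P₂ = 0. Let L : X → X be a bounded linear operator with L∘P₁ = P₁∘L, and suppose there is a bounded linear operator L' : X → X with L'∘L∘P₁ = P₁, L∘L'∘P₁ = P₁ and P₁∘L'∘P₁ = L'∘P₁. Let C₁ ≥ 1, C₂ ≥ 1 and α₁ > α₂ ≥ 0 be constants such that for every integer j ≥ 0: ‖(L')^j∘P₁‖ ≤ C₁·α₁^{−j} and ‖L^j∘P₂‖ ≤ C₂·α₂^{j} (with the convention α₂⁰ = 1). Let N : X → X be globally Lipschitz with constant ℓ and N(0) = 0, and let γ₂ ≤ γ₁ be real numbers with α₂ < e^{γ₂}, e^{γ₁} < α₁, and (C₁/(α₁ − s) + C₂/(s − α₂))·ℓ < 1 for every s ∈ [e^{γ₂}, e^{γ₁}]. Set F := L + N. Then there exists a globally Lipschitz map φ : range(P₁) → range(P₂) with φ(0) = 0 such that the set W := { v + φ(v) : v ∈ range(P₁) } satisfies: (i) F(W) ⊆ W; (ii) for every u ∈ W there exists a sequence (u_k)_{k ∈ ℕ} with u₀ = u, u_k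 ∈ W and F(u_{k+1}) = u_k for all k, such that for every ε > 0 there is a constant C with ‖u_k‖ ≤ C·e^{(−γ₁ + ε)·k} for all k; and (iii) conversely, if (u_k)_{k ∈ ℕ} is any sequence in X with F(u_{k+1}) = u_k for all k and such that for every ε > 0 there is a constant C with ‖u_k‖ ≤ C·e^{(−γ₂ + ε)·k} for all k, then u_k ∈ W for every k. -/

import Mathlib

open Finset Filter Topology

set_option linter.unusedSectionVars false

section CHTaux

variable {X : Type*} [NormedAddCommGroup X] [NormedSpace ℝ X]
variable (P₁ P₂ L L' : X →L[ℝ] X) (N : X → X)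

/-- The Lyapunov–Perron operator for negative semiorbits of `F = L + N`. -/
noncomputable def chtG (ξ : X) (u : ℕ → X) (k : ℕ) : X :=
  (L' ^ k) (P₁ ξ) - ∑ i ∈ Finset.range k, (L' ^ (k - i)) (P₁ (N (u (i + 1))))
    + ∑' j : ℕ, (L ^ j) (P₂ (N (u (k + 1 + j))))

section ops
variable (hsum : P₁ + P₂ = ContinuousLinearMap.id ℝ X)
    (hP₁ : P₁.comp P₁ = P₁) (hP₁₂ : P₁.comp P₂ = 0)
    (hcomm : L.comp P₁ = P₁.comp L)
    (hL'₁ : (L'.comp L).comp P₁ = P₁)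
    (hL'₂ : (L.comp L').comp P₁ = P₁)
    (hL'₃ : (P₁.comp L').comp P₁ = L'.comp P₁)

include hsum in
lemma cht_idsum : ∀ x : X, P₁ x + P₂ x = x := fun x => by
  have := DFunLike.congr_fun hsum x; simpa using this

include hP₁ in
lemma cht_p11 : ∀ x : X, P₁ (P₁ x) = P₁ x := fun x => DFunLike.congr_fun hP₁ x

include hP₁₂ in
lemma cht_p12 : ∀ x : X, P₁ (P₂ x) = 0 := fun x => by
  have := DFunLike.congr_fun hP₁₂ x; simpa using this

include hsum hP₁ in
lemma cht_p21 : ∀ x : X, P₂ (P₁ x) = 0 := fun x => by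
  have h1 := cht_idsum P₁ P₂ hsum (P₁ x)
  have h2 := cht_p11 P₁ hP₁ x
  linear_combination (norm := abel) h1 - h2

include hsum hP₁₂ in
lemma cht_p22 : ∀ x : X, P₂ (P₂ x) = P₂ x := fun x => by
  have h1 := cht_idsum P₁ P₂ hsum (P₂ x)
  have h2 := cht_p12 P₁ P₂ hP₁₂ x
  linear_combination (norm := abel) h1 - h2

include hcomm in
lemma cht_lp1 : ∀ x : X, L (P₁ x) = P₁ (L x) := fun x => DFunLike.congr_fun hcomm x

include hsum hcomm in
lemma cht_lp2 : ∀ x : X, L (P₂ x) = P₂ (L x) := fun x => by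
  have h1 := cht_idsum P₁ P₂ hsum x
  have h2 := cht_idsum P₁ P₂ hsum (L x)
  have h3 := cht_lp1 P₁ L hcomm x
  have : L (P₁ x) + L (P₂ x) = L x := by rw [← map_add]; rw [h1]
  linear_combination (norm := abel) this - h3 - h2

include hL'₁ in
lemma cht_l'l : ∀ x : X, L' (L (P₁ x)) = P₁ x := fun x => DFunLike.congr_fun hL'₁ x

include hL'₂ in
lemma cht_ll' : ∀ x : X, L (L' (P₁ x)) = P₁ x := fun x => DFunLike.congr_fun hL'₂ x

include hL'₃ in
lemma cht_pl'p : ∀ x : X, P₁ (L' (P₁ x)) = L' (P₁ x) := fun x => DFunLike.congr_fun hL'₃ x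

include hP₁ hL'₃ in
lemma cht_pow_inv : ∀ (m : ℕ) (x : X), P₁ ((L' ^ m) (P₁ x)) = (L' ^ m) (P₁ x) := by
  intro m
  induction m with
  | zero => intro x; simpa using cht_p11 P₁ hP₁ x
  | succ n ih =>
      intro x
      have h1 : (L' ^ (n + 1)) (P₁ x) = L' ((L' ^ n) (P₁ x)) := by
        rw [pow_succ']; rfl
      rw [h1, ← ih x, cht_pl'p P₁ L' hL'₃, ih x]

include hP₁ hL'₂ hL'₃ in
lemma cht_LL'pow : ∀ (m : ℕ) (x : X), L ((L' ^ (m + 1)) (P₁ x)) = (L' ^ m) (P₁ x) := by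
  intro m x
  have h1 : (L' ^ (m + 1)) (P₁ x) = L' ((L' ^ m) (P₁ x)) := by rw [pow_succ']; rfl
  rw [h1, ← cht_pow_inv P₁ L' hP₁ hL'₃ m x, cht_ll' P₁ L L' hL'₂,
    cht_pow_inv P₁ L' hP₁ hL'₃ m x]

include hsum hP₁ hL'₃ in
lemma cht_p2l'pow : ∀ (m : ℕ) (x : X), P₂ ((L' ^ m) (P₁ x)) = 0 := by
  intro m x
  rw [← cht_pow_inv P₁ L' hP₁ hL'₃ m x, cht_p21 P₁ P₂ hsum hP₁]

include hcomm in
lemma cht_plpow : ∀ (j : ℕ) (x : X), P₁ ((L ^ j) x) = (L ^ j) (P₁ x) := by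
  intro j
  induction j with
  | zero => intro x; simp
  | succ n ih =>
      intro x
      have h1 : ∀ y : X, (L ^ (n + 1)) y = L ((L ^ n) y) := fun y => by rw [pow_succ']; rfl
      rw [h1, ← cht_lp1 P₁ L hcomm, ih, h1]

include hcomm hP₁₂ in
lemma cht_p1lpow_p2 : ∀ (j : ℕ) (x : X), P₁ ((L ^ j) (P₂ x)) = 0 := by
  intro j x
  rw [cht_plpow P₁ L hcomm, cht_p12 P₁ P₂ hP₁₂, map_zero]

include hsum hP₁ hcomm hP₁₂ in
lemma cht_p2lpow_p2 : ∀ (j : ℕ) (x : X), P₂ ((L ^ j) (P₂ x)) = (L ^ j) (P₂ x) := by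
  intro j x
  have h1 := cht_idsum P₁ P₂ hsum ((L ^ j) (P₂ x))
  have h2 := cht_p1lpow_p2 P₁ P₂ L hP₁₂ hcomm j x
  linear_combination (norm := abel) h1 - h2

end ops
end CHTaux
section CHTest

variable {X : Type*} [NormedAddCommGroup X] [NormedSpace ℝ X] [CompleteSpace X]
variable (P₁ P₂ L L' : X →L[ℝ] X) (N : X → X)
variable (C₁ C₂ α₁ α₂ ℓ s : ℝ)

lemma cht_b1 (hdich₁ : ∀ j : ℕ, ‖(L' ^ j).comp P₁‖ ≤ C₁ * (α₁ ^ j)⁻¹) (m : ℕ) (x : X) :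
    ‖(L' ^ m) (P₁ x)‖ ≤ C₁ * (α₁ ^ m)⁻¹ * ‖x‖ := by
  have h : (L' ^ m) (P₁ x) = ((L' ^ m).comp P₁) x := rfl
  rw [h]
  exact ((L' ^ m).comp P₁).le_opNorm x |>.trans
    (mul_le_mul_of_nonneg_right (hdich₁ m) (norm_nonneg x))

lemma cht_b2 (hdich₂ : ∀ j : ℕ, ‖(L ^ j).comp P₂‖ ≤ C₂ * α₂ ^ j) (j : ℕ) (x : X) :
    ‖(L ^ j) (P₂ x)‖ ≤ C₂ * α₂ ^ j * ‖x‖ := by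
  have h : (L ^ j) (P₂ x) = ((L ^ j).comp P₂) x := rfl
  rw [h]
  exact ((L ^ j).comp P₂).le_opNorm x |>.trans
    (mul_le_mul_of_nonneg_right (hdich₂ j) (norm_nonneg x))

lemma cht_geo_fin (hs0 : 0 < s) (hsα₁ : s < α₁) (k : ℕ) :
    ∑ i ∈ Finset.range k, (α₁ ^ (k - i))⁻¹ * s⁻¹ ^ (i + 1) ≤ (α₁ - s)⁻¹ * s⁻¹ ^ k := by
  have hα₁0 : 0 < α₁ := hs0.trans hsα₁
  have hr0 : (0:ℝ) ≤ s / α₁ := by positivity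
  have hr1 : s / α₁ < 1 := (div_lt_one hα₁0).mpr hsα₁
  have h1 : ∑ i ∈ Finset.range k, (α₁ ^ (k - i))⁻¹ * s⁻¹ ^ (i + 1)
      = (∑ j ∈ Finset.range k, (s / α₁) ^ j) * (α₁⁻¹ * s⁻¹ ^ k) := by
    rw [← Finset.sum_range_reflect, Finset.sum_mul]
    refine Finset.sum_congr rfl fun j hj => ?_
    have hjk : j < k := Finset.mem_range.mp hj
    have e1 : k - (k - 1 - j) = j + 1 := by omega
    have e2 : k - 1 - j + 1 = k - j := by omega
    rw [e1, e2]
    have e3 : (s⁻¹ : ℝ) ^ (k - j) = s⁻¹ ^ k * s ^ j := by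
      have e4 : k - j + j = k := by omega
      have : (s⁻¹ : ℝ) ^ (k - j + j) = s⁻¹ ^ (k - j) * s⁻¹ ^ j := pow_add _ _ _
      rw [e4] at this
      rw [this]
      field_simp
      rw [one_div, ← mul_pow, inv_mul_cancel₀ (ne_of_gt hs0), one_pow]
    rw [e3]
    have hα₁ : α₁ ≠ 0 := ne_of_gt hα₁0
    have hs : s ≠ 0 := ne_of_gt hs0
    field_simp
    ring
    rw [mul_assoc (s ^ j * α₁), ← mul_pow, mul_inv_cancel₀ hα₁, one_pow, mul_one]
  rw [h1]
  have h2 : ∑ j ∈ Finset.range k, (s / α₁) ^ j ≤ (1 - s / α₁)⁻¹ := by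
    calc ∑ j ∈ Finset.range k, (s / α₁) ^ j
        ≤ ∑' j : ℕ, (s / α₁) ^ j :=
          Summable.sum_le_tsum (Finset.range k) (fun i _ => pow_nonneg hr0 i)
            (summable_geometric_of_lt_one hr0 hr1)
      _ = (1 - s / α₁)⁻¹ := tsum_geometric_of_lt_one hr0 hr1
  have h3 : (1 - s / α₁)⁻¹ * (α₁⁻¹ * s⁻¹ ^ k) = (α₁ - s)⁻¹ * s⁻¹ ^ k := by
    rw [show (1 : ℝ) - s / α₁ = (α₁ - s) / α₁ by field_simp]
    rw [inv_div]
    have hα₁ : α₁ ≠ 0 := ne_of_gt hα₁0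
    have hs : s ≠ 0 := ne_of_gt hs0
    have hd : α₁ - s ≠ 0 := by linarith
    field_simp
  calc (∑ j ∈ Finset.range k, (s / α₁) ^ j) * (α₁⁻¹ * s⁻¹ ^ k)
      ≤ (1 - s / α₁)⁻¹ * (α₁⁻¹ * s⁻¹ ^ k) := by
        apply mul_le_mul_of_nonneg_right h2; positivity
    _ = (α₁ - s)⁻¹ * s⁻¹ ^ k := h3

lemma cht_series (hC₂ : 1 ≤ C₂) (hα₂0 : 0 ≤ α₂) (hsα₂ : α₂ < s)
    (hdich₂ : ∀ j : ℕ, ‖(L ^ j).comp P₂‖ ≤ C₂ * α₂ ^ j)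
    (w : ℕ → X) (c : ℝ) (hw : ∀ m, ‖w m‖ ≤ c * s⁻¹ ^ m) (k : ℕ) :
    Summable (fun j : ℕ => (L ^ j) (P₂ (w (k + 1 + j)))) ∧
    ‖∑' j : ℕ, (L ^ j) (P₂ (w (k + 1 + j)))‖ ≤ C₂ * c * (s - α₂)⁻¹ * s⁻¹ ^ k := by
  have hs0 : 0 < s := lt_of_le_of_lt hα₂0 hsα₂
  have hc : 0 ≤ c := by
    have := hw 0; simp only [pow_zero, mul_one] at this
    exact le_trans (norm_nonneg _) this
  have hr0 : (0:ℝ) ≤ α₂ / s := by positivity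
  have hr1 : α₂ / s < 1 := (div_lt_one hs0).mpr hsα₂
  have key : ∀ j : ℕ, ‖(L ^ j) (P₂ (w (k + 1 + j)))‖
      ≤ (C₂ * c * s⁻¹ ^ (k + 1)) * (α₂ / s) ^ j := by
    intro j
    have h1 : ‖(L ^ j) (P₂ (w (k + 1 + j)))‖ ≤ C₂ * α₂ ^ j * ‖w (k + 1 + j)‖ :=
      cht_b2 P₂ L C₂ α₂ hdich₂ j _
    have h2 : C₂ * α₂ ^ j * ‖w (k + 1 + j)‖ ≤ C₂ * α₂ ^ j * (c * s⁻¹ ^ (k + 1 + j)) := by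
      apply mul_le_mul_of_nonneg_left (hw _); positivity
    have h3 : C₂ * α₂ ^ j * (c * s⁻¹ ^ (k + 1 + j)) = (C₂ * c * s⁻¹ ^ (k + 1)) * (α₂ / s) ^ j := by
      rw [pow_add]
      simp only [inv_pow, div_eq_mul_inv]
      ring
    linarith
  have hgs : Summable (fun j : ℕ => (C₂ * c * s⁻¹ ^ (k + 1)) * (α₂ / s) ^ j) :=
    (summable_geometric_of_lt_one hr0 hr1).mul_left _
  have hnorm : Summable (fun j : ℕ => ‖(L ^ j) (P₂ (w (k + 1 + j)))‖) :=
    Summable.of_nonneg_of_le (fun j => norm_nonneg _) key hgs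
  refine ⟨hnorm.of_norm, ?_⟩
  calc ‖∑' j : ℕ, (L ^ j) (P₂ (w (k + 1 + j)))‖
      ≤ ∑' j : ℕ, ‖(L ^ j) (P₂ (w (k + 1 + j)))‖ := norm_tsum_le_tsum_norm hnorm
    _ ≤ ∑' j : ℕ, (C₂ * c * s⁻¹ ^ (k + 1)) * (α₂ / s) ^ j := Summable.tsum_le_tsum key hnorm hgs
    _ = (C₂ * c * s⁻¹ ^ (k + 1)) * (1 - α₂ / s)⁻¹ := by
        rw [tsum_mul_left, tsum_geometric_of_lt_one hr0 hr1]
    _ = C₂ * c * (s - α₂)⁻¹ * s⁻¹ ^ k := by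
        rw [show (1 : ℝ) - α₂ / s = (s - α₂) / s by field_simp, inv_div, pow_succ]
        have hss : s - α₂ ≠ 0 := by linarith
        field_simp

lemma cht_contract
    (hP₁ : P₁.comp P₁ = P₁)
    (hC₁ : 1 ≤ C₁) (hC₂ : 1 ≤ C₂) (hℓ : 0 ≤ ℓ)
    (hα₂0 : 0 ≤ α₂) (hsα₂ : α₂ < s) (hsα₁ : s < α₁)
    (hdich₁ : ∀ j : ℕ, ‖(L' ^ j).comp P₁‖ ≤ C₁ * (α₁ ^ j)⁻¹)
    (hdich₂ : ∀ j : ℕ, ‖(L ^ j).comp P₂‖ ≤ C₂ * α₂ ^ j)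
    (hN : ∀ u v : X, ‖N u - N v‖ ≤ ℓ * ‖u - v‖) (hN0 : N 0 = 0)
    (ξ η : X) (u v : ℕ → X) (Mu Mv M : ℝ)
    (hu : ∀ m, ‖u m‖ ≤ Mu * s⁻¹ ^ m) (hv : ∀ m, ‖v m‖ ≤ Mv * s⁻¹ ^ m)
    (hd : ∀ m, ‖u m - v m‖ ≤ M * s⁻¹ ^ m) (k : ℕ) :
    ‖chtG P₁ P₂ L L' N ξ u k - chtG P₁ P₂ L L' N η v k‖ ≤
      (C₁ * ‖P₁ ξ - P₁ η‖ + ((C₁ / (α₁ - s) + C₂ / (s - α₂)) * ℓ) * M) * s⁻¹ ^ k := by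
  have hs0 : 0 < s := lt_of_le_of_lt hα₂0 hsα₂
  have hM : 0 ≤ M := by
    have := hd 0; simp only [pow_zero, mul_one] at this
    exact le_trans (norm_nonneg _) this
  have hNu : ∀ m, ‖N (u m)‖ ≤ ℓ * Mu * s⁻¹ ^ m := fun m => by
    have h1 : ‖N (u m)‖ ≤ ℓ * ‖u m‖ := by
      have := hN (u m) 0; rw [hN0, sub_zero, sub_zero] at this; exact this
    calc ‖N (u m)‖ ≤ ℓ * ‖u m‖ := h1
      _ ≤ ℓ * (Mu * s⁻¹ ^ m) := mul_le_mul_of_nonneg_left (hu m) hℓ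
      _ = ℓ * Mu * s⁻¹ ^ m := by ring
  have hNv : ∀ m, ‖N (v m)‖ ≤ ℓ * Mv * s⁻¹ ^ m := fun m => by
    have h1 : ‖N (v m)‖ ≤ ℓ * ‖v m‖ := by
      have := hN (v m) 0; rw [hN0, sub_zero, sub_zero] at this; exact this
    calc ‖N (v m)‖ ≤ ℓ * ‖v m‖ := h1
      _ ≤ ℓ * (Mv * s⁻¹ ^ m) := mul_le_mul_of_nonneg_left (hv m) hℓ
      _ = ℓ * Mv * s⁻¹ ^ m := by ring
  have hNd : ∀ m, ‖N (u m) - N (v m)‖ ≤ ℓ * M * s⁻¹ ^ m := fun m => by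
    calc ‖N (u m) - N (v m)‖ ≤ ℓ * ‖u m - v m‖ := hN _ _
      _ ≤ ℓ * (M * s⁻¹ ^ m) := mul_le_mul_of_nonneg_left (hd m) hℓ
      _ = ℓ * M * s⁻¹ ^ m := by ring
  have hU := cht_series P₂ L C₂ α₂ s hC₂ hα₂0 hsα₂ hdich₂ (fun m => N (u m)) (ℓ * Mu) hNu k
  have hV := cht_series P₂ L C₂ α₂ s hC₂ hα₂0 hsα₂ hdich₂ (fun m => N (v m)) (ℓ * Mv) hNv k
  have hW := cht_series P₂ L C₂ α₂ s hC₂ hα₂0 hsα₂ hdich₂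
    (fun m => N (u m) - N (v m)) (ℓ * M) hNd k
  set A : X := (L' ^ k) (P₁ (ξ - η)) with hA
  set B : X := ∑ i ∈ Finset.range k, (L' ^ (k - i)) (P₁ (N (u (i + 1)) - N (v (i + 1)))) with hB
  set Cc : X := ∑' j : ℕ, (L ^ j) (P₂ (N (u (k + 1 + j)) - N (v (k + 1 + j)))) with hC
  have eΔ : chtG P₁ P₂ L L' N ξ u k - chtG P₁ P₂ L L' N η v k = A - B + Cc := by
    simp only [chtG]
    have e1 : (L' ^ k) (P₁ ξ) - (L' ^ k) (P₁ η) = A := by rw [hA, ← map_sub, ← map_sub]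
    have e2 : (∑ i ∈ Finset.range k, (L' ^ (k - i)) (P₁ (N (u (i + 1)))))
        - ∑ i ∈ Finset.range k, (L' ^ (k - i)) (P₁ (N (v (i + 1)))) = B := by
      rw [hB, ← Finset.sum_sub_distrib]
      exact Finset.sum_congr rfl fun i _ => by rw [← map_sub, ← map_sub]
    have e3 : (∑' j : ℕ, (L ^ j) (P₂ (N (u (k + 1 + j)))))
        - ∑' j : ℕ, (L ^ j) (P₂ (N (v (k + 1 + j)))) = Cc := by
      rw [hC, ← Summable.tsum_sub hU.1 hV.1]
      exact tsum_congr fun j => by rw [← map_sub, ← map_sub]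
    rw [← e1, ← e2, ← e3]
    abel
  rw [eΔ]
  have hAn : ‖A‖ ≤ C₁ * ‖P₁ ξ - P₁ η‖ * s⁻¹ ^ k := by
    have h1 := cht_b1 P₁ L' C₁ α₁ hdich₁ k (P₁ (ξ - η))
    rw [cht_p11 P₁ hP₁ (ξ - η)] at h1
    have h2 : (α₁ ^ k)⁻¹ ≤ s⁻¹ ^ k := by
      rw [inv_pow]
      exact inv_anti₀ (pow_pos hs0 k) (pow_le_pow_left₀ hs0.le hsα₁.le k)
    have h3 : ‖P₁ (ξ - η)‖ = ‖P₁ ξ - P₁ η‖ := by rw [map_sub]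
    rw [hA]
    calc ‖(L' ^ k) (P₁ (ξ - η))‖ ≤ C₁ * (α₁ ^ k)⁻¹ * ‖P₁ (ξ - η)‖ := h1
      _ = C₁ * ‖P₁ ξ - P₁ η‖ * (α₁ ^ k)⁻¹ := by rw [h3]; ring
      _ ≤ C₁ * ‖P₁ ξ - P₁ η‖ * s⁻¹ ^ k := by
          apply mul_le_mul_of_nonneg_left h2; positivity
  have hBn : ‖B‖ ≤ C₁ * (ℓ * M) * (α₁ - s)⁻¹ * s⁻¹ ^ k := by
    rw [hB]
    calc ‖∑ i ∈ Finset.range k, (L' ^ (k - i)) (P₁ (N (u (i + 1)) - N (v (i + 1))))‖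
        ≤ ∑ i ∈ Finset.range k, ‖(L' ^ (k - i)) (P₁ (N (u (i + 1)) - N (v (i + 1))))‖ :=
          norm_sum_le _ _
      _ ≤ ∑ i ∈ Finset.range k, (C₁ * (ℓ * M)) * ((α₁ ^ (k - i))⁻¹ * s⁻¹ ^ (i + 1)) := by
          refine Finset.sum_le_sum fun i _ => ?_
          have h1 := cht_b1 P₁ L' C₁ α₁ hdich₁ (k - i) (N (u (i + 1)) - N (v (i + 1)))
          have h2 : C₁ * (α₁ ^ (k - i))⁻¹ * ‖N (u (i + 1)) - N (v (i + 1))‖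
              ≤ C₁ * (α₁ ^ (k - i))⁻¹ * (ℓ * M * s⁻¹ ^ (i + 1)) := by
            apply mul_le_mul_of_nonneg_left (hNd (i + 1))
            have : (0:ℝ) < α₁ := hs0.trans hsα₁
            positivity
          calc ‖(L' ^ (k - i)) (P₁ (N (u (i + 1)) - N (v (i + 1))))‖
              ≤ C₁ * (α₁ ^ (k - i))⁻¹ * ‖N (u (i + 1)) - N (v (i + 1))‖ := h1
            _ ≤ C₁ * (α₁ ^ (k - i))⁻¹ * (ℓ * M * s⁻¹ ^ (i + 1)) := h2
            _ = (C₁ * (ℓ * M)) * ((α₁ ^ (k - i))⁻¹ * s⁻¹ ^ (i + 1)) := by ring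
      _ = (C₁ * (ℓ * M)) * ∑ i ∈ Finset.range k, (α₁ ^ (k - i))⁻¹ * s⁻¹ ^ (i + 1) := by
          rw [Finset.mul_sum]
      _ ≤ (C₁ * (ℓ * M)) * ((α₁ - s)⁻¹ * s⁻¹ ^ k) := by
          apply mul_le_mul_of_nonneg_left (cht_geo_fin α₁ s hs0 hsα₁ k); positivity
      _ = C₁ * (ℓ * M) * (α₁ - s)⁻¹ * s⁻¹ ^ k := by ring
  have hCn : ‖Cc‖ ≤ C₂ * (ℓ * M) * (s - α₂)⁻¹ * s⁻¹ ^ k := hW.2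
  calc ‖A - B + Cc‖ ≤ ‖A - B‖ + ‖Cc‖ := norm_add_le _ _
    _ ≤ (‖A‖ + ‖B‖) + ‖Cc‖ := by linarith [norm_sub_le A B]
    _ ≤ (C₁ * ‖P₁ ξ - P₁ η‖ * s⁻¹ ^ k + C₁ * (ℓ * M) * (α₁ - s)⁻¹ * s⁻¹ ^ k)
        + C₂ * (ℓ * M) * (s - α₂)⁻¹ * s⁻¹ ^ k := by linarith
    _ = (C₁ * ‖P₁ ξ - P₁ η‖ + ((C₁ / (α₁ - s) + C₂ / (s - α₂)) * ℓ) * M) * s⁻¹ ^ k := by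
        rw [div_eq_mul_inv, div_eq_mul_inv]
        ring

lemma cht_G_zero (hN0 : N 0 = 0) (k : ℕ) :
    chtG P₁ P₂ L L' N 0 (fun _ => 0) k = 0 := by
  simp [chtG, hN0]

lemma cht_bound
    (hP₁ : P₁.comp P₁ = P₁)
    (hC₁ : 1 ≤ C₁) (hC₂ : 1 ≤ C₂) (hℓ : 0 ≤ ℓ)
    (hα₂0 : 0 ≤ α₂) (hsα₂ : α₂ < s) (hsα₁ : s < α₁)
    (hdich₁ : ∀ j : ℕ, ‖(L' ^ j).comp P₁‖ ≤ C₁ * (α₁ ^ j)⁻¹)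
    (hdich₂ : ∀ j : ℕ, ‖(L ^ j).comp P₂‖ ≤ C₂ * α₂ ^ j)
    (hN : ∀ u v : X, ‖N u - N v‖ ≤ ℓ * ‖u - v‖) (hN0 : N 0 = 0)
    (ξ : X) (u : ℕ → X) (Mu : ℝ)
    (hu : ∀ m, ‖u m‖ ≤ Mu * s⁻¹ ^ m) (k : ℕ) :
    ‖chtG P₁ P₂ L L' N ξ u k‖ ≤
      (C₁ * ‖P₁ ξ‖ + ((C₁ / (α₁ - s) + C₂ / (s - α₂)) * ℓ) * Mu) * s⁻¹ ^ k := by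
  have h := cht_contract P₁ P₂ L L' N C₁ C₂ α₁ α₂ ℓ s hP₁ hC₁ hC₂ hℓ hα₂0 hsα₂ hsα₁
    hdich₁ hdich₂ hN hN0 ξ 0 u (fun _ => 0) Mu 0 Mu hu
    (fun m => by simp) (fun m => by simpa using hu m) k
  rw [cht_G_zero P₁ P₂ L L' N hN0 k, sub_zero] at h
  simpa using h

/-- The Picard iteration for the Lyapunov–Perron operator. -/
noncomputable def chtIter (ξ : X) : ℕ → ℕ → X
  | 0 => fun _ => 0
  | n + 1 => chtG P₁ P₂ L L' N ξ (chtIter ξ n)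

lemma cht_exists
    (hP₁ : P₁.comp P₁ = P₁)
    (hC₁ : 1 ≤ C₁) (hC₂ : 1 ≤ C₂) (hℓ : 0 ≤ ℓ)
    (hα₂0 : 0 ≤ α₂) (hsα₂ : α₂ < s) (hsα₁ : s < α₁)
    (hdich₁ : ∀ j : ℕ, ‖(L' ^ j).comp P₁‖ ≤ C₁ * (α₁ ^ j)⁻¹)
    (hdich₂ : ∀ j : ℕ, ‖(L ^ j).comp P₂‖ ≤ C₂ * α₂ ^ j)
    (hN : ∀ u v : X, ‖N u - N v‖ ≤ ℓ * ‖u - v‖) (hN0 : N 0 = 0)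
    (hκ1 : (C₁ / (α₁ - s) + C₂ / (s - α₂)) * ℓ < 1)
    (ξ : X) :
    ∃ u : ℕ → X, (∀ k, chtG P₁ P₂ L L' N ξ u k = u k) ∧
      (∀ k, ‖u k‖ ≤ (C₁ * ‖P₁ ξ‖ *
        (1 - (C₁ / (α₁ - s) + C₂ / (s - α₂)) * ℓ)⁻¹) * s⁻¹ ^ k) := by
  have hs0 : 0 < s := lt_of_le_of_lt hα₂0 hsα₂
  set κ : ℝ := (C₁ / (α₁ - s) + C₂ / (s - α₂)) * ℓ with hκdef
  have hd1 : (0:ℝ) < α₁ - s := by linarith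
  have hd2 : (0:ℝ) < s - α₂ := by linarith
  have hC₁0 : (0:ℝ) ≤ C₁ := by linarith
  have hC₂0 : (0:ℝ) ≤ C₂ := by linarith
  have hκ0 : 0 ≤ κ :=
    mul_nonneg (add_nonneg (div_nonneg hC₁0 hd1.le) (div_nonneg hC₂0 hd2.le)) hℓ
  have h1κ : (0:ℝ) < 1 - κ := by linarith
  set E : ℝ := C₁ * ‖P₁ ξ‖ * (1 - κ)⁻¹ with hEdef
  have hE0 : 0 ≤ E := by positivity
  have hEκ : C₁ * ‖P₁ ξ‖ + κ * E = E := by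
    rw [hEdef]; field_simp; ring
  set iter : ℕ → ℕ → X := chtIter P₁ P₂ L L' N ξ with hiterdef
  have i0 : iter 0 = fun _ : ℕ => (0:X) := rfl
  have iterS : ∀ n, iter (n + 1) = chtG P₁ P₂ L L' N ξ (iter n) := fun n => rfl
  have claim1 : ∀ n k, ‖iter n k‖ ≤ E * s⁻¹ ^ k := by
    intro n
    induction n with
    | zero => intro k; rw [i0]; simp; positivity
    | succ n ih =>
        intro k
        rw [iterS n]
        calc ‖chtG P₁ P₂ L L' N ξ (iter n) k‖
            ≤ (C₁ * ‖P₁ ξ‖ + κ * E) * s⁻¹ ^ k :=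
              cht_bound P₁ P₂ L L' N C₁ C₂ α₁ α₂ ℓ s hP₁ hC₁ hC₂ hℓ hα₂0 hsα₂ hsα₁
                hdich₁ hdich₂ hN hN0 ξ (iter n) E ih k
          _ = E * s⁻¹ ^ k := by rw [hEκ]
  have claim2 : ∀ n k, ‖iter (n + 1) k - iter n k‖ ≤ (C₁ * ‖P₁ ξ‖) * κ ^ n * s⁻¹ ^ k := by
    intro n
    induction n with
    | zero =>
        intro k
        have h := cht_bound P₁ P₂ L L' N C₁ C₂ α₁ α₂ ℓ s hP₁ hC₁ hC₂ hℓ hα₂0 hsα₂ hsα₁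
          hdich₁ hdich₂ hN hN0 ξ (fun _ => 0) 0 (fun m => by simp) k
        have e : iter 1 k - iter 0 k = chtG P₁ P₂ L L' N ξ (fun _ => 0) k := by
          rw [iterS 0, i0]; simp
        rw [e]
        calc ‖chtG P₁ P₂ L L' N ξ (fun _ => 0) k‖
            ≤ (C₁ * ‖P₁ ξ‖ + κ * 0) * s⁻¹ ^ k := h
          _ = (C₁ * ‖P₁ ξ‖) * κ ^ 0 * s⁻¹ ^ k := by ring
    | succ n ih =>
        intro k
        have h := cht_contract P₁ P₂ L L' N C₁ C₂ α₁ α₂ ℓ s hP₁ hC₁ hC₂ hℓ hα₂0 hsα₂ hsα₁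
          hdich₁ hdich₂ hN hN0 ξ ξ (iter (n + 1)) (iter n) E E ((C₁ * ‖P₁ ξ‖) * κ ^ n)
          (claim1 (n + 1)) (claim1 n) ih k
        have e1 : iter (n + 1 + 1) k = chtG P₁ P₂ L L' N ξ (iter (n + 1)) k := by
          rw [iterS (n + 1)]
        have e2 : iter (n + 1) k = chtG P₁ P₂ L L' N ξ (iter n) k := by
          rw [iterS n]
        calc ‖iter (n + 1 + 1) k - iter (n + 1) k‖
            = ‖chtG P₁ P₂ L L' N ξ (iter (n + 1)) k - chtG P₁ P₂ L L' N ξ (iter n) k‖ := by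
              rw [e1, e2]
          _ ≤ (C₁ * ‖P₁ ξ - P₁ ξ‖ + κ * (C₁ * ‖P₁ ξ‖ * κ ^ n)) * s⁻¹ ^ k := h
          _ = (C₁ * ‖P₁ ξ‖) * κ ^ (n + 1) * s⁻¹ ^ k := by
              rw [sub_self, norm_zero]; ring
  have claim3 : ∀ p n k, ‖iter (n + p) k - iter n k‖ ≤ E * κ ^ n * s⁻¹ ^ k := by
    intro p
    induction p with
    | zero => intro n k; simp; positivity
    | succ p ih =>
        intro n k
        have e : n + (p + 1) = (n + 1) + p := by omega
        have h1 : ‖iter (n + (p + 1)) k - iter (n + 1) k‖ ≤ E * κ ^ (n + 1) * s⁻¹ ^ k := by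
          rw [e]; exact ih (n + 1) k
        have h2 := claim2 n k
        have tri : ‖iter (n + (p + 1)) k - iter n k‖
            ≤ ‖iter (n + (p + 1)) k - iter (n + 1) k‖ + ‖iter (n + 1) k - iter n k‖ := by
          have := norm_add_le (iter (n + (p + 1)) k - iter (n + 1) k)
            (iter (n + 1) k - iter n k)
          rwa [sub_add_sub_cancel] at this
        have key : E * κ ^ (n + 1) * s⁻¹ ^ k + (C₁ * ‖P₁ ξ‖) * κ ^ n * s⁻¹ ^ k
            = E * κ ^ n * s⁻¹ ^ k := by
          linear_combination (κ ^ n * s⁻¹ ^ k) * hEκ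
        linarith
  have hcauchy : ∀ k, CauchySeq (fun n => iter n k) := by
    intro k
    apply cauchySeq_of_le_geometric κ ((C₁ * ‖P₁ ξ‖) * s⁻¹ ^ k) hκ1
    intro n
    rw [dist_eq_norm, norm_sub_rev]
    calc ‖iter (n + 1) k - iter n k‖ ≤ (C₁ * ‖P₁ ξ‖) * κ ^ n * s⁻¹ ^ k := claim2 n k
      _ = (C₁ * ‖P₁ ξ‖) * s⁻¹ ^ k * κ ^ n := by ring
  choose u hu using fun k => cauchySeq_tendsto_of_complete (hcauchy k)
  have hub : ∀ k, ‖u k‖ ≤ E * s⁻¹ ^ k := fun k =>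
    le_of_tendsto (hu k).norm (Filter.Eventually.of_forall fun n => claim1 n k)
  have hul : ∀ n k, ‖u k - iter n k‖ ≤ E * κ ^ n * s⁻¹ ^ k := by
    intro n k
    have h1 : Filter.Tendsto (fun p => iter (n + p) k) Filter.atTop (𝓝 (u k)) := by
      have := (hu k).comp (tendsto_add_atTop_nat n)
      exact this.congr fun p => by rw [Function.comp_apply, Nat.add_comm]
    have h2 : Filter.Tendsto (fun p => ‖iter (n + p) k - iter n k‖) Filter.atTop
        (𝓝 ‖u k - iter n k‖) := ((h1.sub tendsto_const_nhds).norm)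
    exact le_of_tendsto h2 (Filter.Eventually.of_forall fun p => claim3 p n k)
  have hfix : ∀ k, chtG P₁ P₂ L L' N ξ u k = u k := by
    intro k
    have hclose : ∀ n, ‖chtG P₁ P₂ L L' N ξ u k - u k‖
        ≤ ((κ * E + E * κ) * s⁻¹ ^ k) * κ ^ n := by
      intro n
      have hstep := cht_contract P₁ P₂ L L' N C₁ C₂ α₁ α₂ ℓ s hP₁ hC₁ hC₂ hℓ hα₂0 hsα₂ hsα₁
        hdich₁ hdich₂ hN hN0 ξ ξ u (iter n) E E (E * κ ^ n) hub (claim1 n)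
        (fun m => by have := hul n m; linarith [hul n m]) k
      rw [sub_self, norm_zero, mul_zero, zero_add] at hstep
      rw [← hκdef] at hstep
      have h2 : ‖chtG P₁ P₂ L L' N ξ (iter n) k - u k‖ ≤ E * κ ^ (n + 1) * s⁻¹ ^ k := by
        rw [← iterS n, norm_sub_rev]
        exact hul (n + 1) k
      have tri : ‖chtG P₁ P₂ L L' N ξ u k - u k‖
          ≤ ‖chtG P₁ P₂ L L' N ξ u k - chtG P₁ P₂ L L' N ξ (iter n) k‖
            + ‖chtG P₁ P₂ L L' N ξ (iter n) k - u k‖ := by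
        have := norm_add_le (chtG P₁ P₂ L L' N ξ u k - chtG P₁ P₂ L L' N ξ (iter n) k)
          (chtG P₁ P₂ L L' N ξ (iter n) k - u k)
        rwa [sub_add_sub_cancel] at this
      have expand : κ * (E * κ ^ n) * s⁻¹ ^ k + E * κ ^ (n + 1) * s⁻¹ ^ k
          = ((κ * E + E * κ) * s⁻¹ ^ k) * κ ^ n := by ring
      linarith
    have hten : Filter.Tendsto (fun n : ℕ => ((κ * E + E * κ) * s⁻¹ ^ k) * κ ^ n)
        Filter.atTop (𝓝 0) := by
      have h := tendsto_pow_atTop_nhds_zero_of_lt_one hκ0 hκ1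
      have := h.const_mul ((κ * E + E * κ) * s⁻¹ ^ k)
      simpa using this
    have h0 : ‖chtG P₁ P₂ L L' N ξ u k - u k‖ ≤ 0 :=
      ge_of_tendsto hten (Filter.Eventually.of_forall hclose)
    have := norm_le_zero_iff.mp h0
    exact sub_eq_zero.mp this
  exact ⟨u, hfix, hub⟩

lemma cht_unique
    (hP₁ : P₁.comp P₁ = P₁)
    (hC₁ : 1 ≤ C₁) (hC₂ : 1 ≤ C₂) (hℓ : 0 ≤ ℓ)
    (hα₂0 : 0 ≤ α₂) (hsα₂ : α₂ < s) (hsα₁ : s < α₁)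
    (hdich₁ : ∀ j : ℕ, ‖(L' ^ j).comp P₁‖ ≤ C₁ * (α₁ ^ j)⁻¹)
    (hdich₂ : ∀ j : ℕ, ‖(L ^ j).comp P₂‖ ≤ C₂ * α₂ ^ j)
    (hN : ∀ u v : X, ‖N u - N v‖ ≤ ℓ * ‖u - v‖) (hN0 : N 0 = 0)
    (hκ1 : (C₁ / (α₁ - s) + C₂ / (s - α₂)) * ℓ < 1)
    (ξ η : X) (u v : ℕ → X) (Mu Mv : ℝ)
    (hfu : ∀ k, chtG P₁ P₂ L L' N ξ u k = u k)
    (hfv : ∀ k, chtG P₁ P₂ L L' N η v k = v k)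
    (hu : ∀ m, ‖u m‖ ≤ Mu * s⁻¹ ^ m) (hv : ∀ m, ‖v m‖ ≤ Mv * s⁻¹ ^ m) :
    ∀ k, ‖u k - v k‖ ≤ C₁ * ‖P₁ ξ - P₁ η‖ *
      (1 - (C₁ / (α₁ - s) + C₂ / (s - α₂)) * ℓ)⁻¹ * s⁻¹ ^ k := by
  have hs0 : 0 < s := lt_of_le_of_lt hα₂0 hsα₂
  set κ : ℝ := (C₁ / (α₁ - s) + C₂ / (s - α₂)) * ℓ with hκdef
  have hd1 : (0:ℝ) < α₁ - s := by linarith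
  have hd2 : (0:ℝ) < s - α₂ := by linarith
  have hC₁0 : (0:ℝ) ≤ C₁ := by linarith
  have hC₂0 : (0:ℝ) ≤ C₂ := by linarith
  have hκ0 : 0 ≤ κ :=
    mul_nonneg (add_nonneg (div_nonneg hC₁0 hd1.le) (div_nonneg hC₂0 hd2.le)) hℓ
  have h1κ : (0:ℝ) < 1 - κ := by linarith
  set D : ℝ := C₁ * ‖P₁ ξ - P₁ η‖ * (1 - κ)⁻¹ with hDdef
  have hD0 : 0 ≤ D := by positivity
  have hDκ : C₁ * ‖P₁ ξ - P₁ η‖ + κ * D = D := by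
    rw [hDdef]; field_simp; ring
  have hMu0 : 0 ≤ Mu := by
    have := hu 0; simp only [pow_zero, mul_one] at this
    exact le_trans (norm_nonneg _) this
  have hMv0 : 0 ≤ Mv := by
    have := hv 0; simp only [pow_zero, mul_one] at this
    exact le_trans (norm_nonneg _) this
  have key : ∀ n k, ‖u k - v k‖ ≤ ((Mu + Mv) * κ ^ n + D) * s⁻¹ ^ k := by
    intro n
    induction n with
    | zero =>
        intro k
        have h1 : ‖u k - v k‖ ≤ ‖u k‖ + ‖v k‖ := norm_sub_le _ _
        have := hu k; have := hv k
        have hsk : (0:ℝ) < s⁻¹ ^ k := by positivity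
        calc ‖u k - v k‖ ≤ ‖u k‖ + ‖v k‖ := h1
          _ ≤ (Mu + Mv) * s⁻¹ ^ k := by nlinarith [hu k, hv k]
          _ ≤ ((Mu + Mv) * κ ^ 0 + D) * s⁻¹ ^ k := by nlinarith
    | succ n ih =>
        intro k
        have h := cht_contract P₁ P₂ L L' N C₁ C₂ α₁ α₂ ℓ s hP₁ hC₁ hC₂ hℓ hα₂0 hsα₂ hsα₁
          hdich₁ hdich₂ hN hN0 ξ η u v Mu Mv ((Mu + Mv) * κ ^ n + D) hu hv ih k
        rw [hfu k, hfv k] at h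
        rw [← hκdef] at h
        have expand : (C₁ * ‖P₁ ξ - P₁ η‖ + κ * ((Mu + Mv) * κ ^ n + D)) * s⁻¹ ^ k
            = ((Mu + Mv) * κ ^ (n + 1) + D) * s⁻¹ ^ k := by
          linear_combination (s⁻¹ ^ k) * hDκ
        linarith
  intro k
  have hten : Filter.Tendsto (fun n : ℕ => ((Mu + Mv) * κ ^ n + D) * s⁻¹ ^ k)
      Filter.atTop (𝓝 (D * s⁻¹ ^ k)) := by
    have h := tendsto_pow_atTop_nhds_zero_of_lt_one hκ0 hκ1
    have h2 := (h.const_mul (Mu + Mv)).add_const D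
    have h3 := h2.mul_const (s⁻¹ ^ k)
    simpa using h3
  have := ge_of_tendsto hten (Filter.Eventually.of_forall fun n => key n k)
  calc ‖u k - v k‖ ≤ D * s⁻¹ ^ k := this
    _ = C₁ * ‖P₁ ξ - P₁ η‖ * (1 - κ)⁻¹ * s⁻¹ ^ k := by rw [hDdef]

lemma cht_Nbound (hℓ : 0 ≤ ℓ) (hN : ∀ u v : X, ‖N u - N v‖ ≤ ℓ * ‖u - v‖) (hN0 : N 0 = 0)
    (u : ℕ → X) (Mu : ℝ) (hu : ∀ m, ‖u m‖ ≤ Mu * s⁻¹ ^ m) :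
    ∀ m, ‖N (u m)‖ ≤ (ℓ * Mu) * s⁻¹ ^ m := fun m => by
  have h1 : ‖N (u m)‖ ≤ ℓ * ‖u m‖ := by
    have := hN (u m) 0; rwa [hN0, sub_zero, sub_zero] at this
  calc ‖N (u m)‖ ≤ ℓ * ‖u m‖ := h1
    _ ≤ ℓ * (Mu * s⁻¹ ^ m) := mul_le_mul_of_nonneg_left (hu m) hℓ
    _ = (ℓ * Mu) * s⁻¹ ^ m := by ring

lemma cht_fix_orbit
    (hsum : P₁ + P₂ = ContinuousLinearMap.id ℝ X)
    (hP₁ : P₁.comp P₁ = P₁) (hP₁₂ : P₁.comp P₂ = 0)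
    (hL'₂ : (L.comp L').comp P₁ = P₁)
    (hL'₃ : (P₁.comp L').comp P₁ = L'.comp P₁)
    (hC₂ : 1 ≤ C₂) (hℓ : 0 ≤ ℓ)
    (hα₂0 : 0 ≤ α₂) (hsα₂ : α₂ < s)
    (hdich₂ : ∀ j : ℕ, ‖(L ^ j).comp P₂‖ ≤ C₂ * α₂ ^ j)
    (hN : ∀ u v : X, ‖N u - N v‖ ≤ ℓ * ‖u - v‖) (hN0 : N 0 = 0)
    (ξ : X) (u : ℕ → X) (Mu : ℝ) (hu : ∀ m, ‖u m‖ ≤ Mu * s⁻¹ ^ m)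
    (hfix : ∀ k, chtG P₁ P₂ L L' N ξ u k = u k) :
    ∀ k, L (u (k + 1)) + N (u (k + 1)) = u k := by
  intro k
  have hNu := cht_Nbound N ℓ s hℓ hN hN0 u Mu hu
  have hsumk := (cht_series P₂ L C₂ α₂ s hC₂ hα₂0 hsα₂ hdich₂
    (fun m => N (u m)) (ℓ * Mu) hNu k).1
  have hsumk1 := (cht_series P₂ L C₂ α₂ s hC₂ hα₂0 hsα₂ hdich₂
    (fun m => N (u m)) (ℓ * Mu) hNu (k + 1)).1
  rw [← hfix (k + 1)]
  conv_rhs => rw [← hfix k]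
  simp only [chtG]
  rw [map_add, map_sub]
  have eA : L ((L' ^ (k + 1)) (P₁ ξ)) = (L' ^ k) (P₁ ξ) :=
    cht_LL'pow P₁ L L' hP₁ hL'₂ hL'₃ k ξ
  have eB : L (∑ i ∈ Finset.range (k + 1), (L' ^ (k + 1 - i)) (P₁ (N (u (i + 1)))))
      = (∑ i ∈ Finset.range k, (L' ^ (k - i)) (P₁ (N (u (i + 1)))))
        + P₁ (N (u (k + 1))) := by
    rw [map_sum, Finset.sum_range_succ]
    congr 1
    · refine Finset.sum_congr rfl fun i hi => ?_
      have hik : i < k := Finset.mem_range.mp hi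
      have e : k + 1 - i = (k - i) + 1 := by omega
      rw [e]
      exact cht_LL'pow P₁ L L' hP₁ hL'₂ hL'₃ (k - i) (N (u (i + 1)))
    · have e : k + 1 - k = 0 + 1 := by omega
      rw [e]
      have := cht_LL'pow P₁ L L' hP₁ hL'₂ hL'₃ 0 (N (u (k + 1)))
      simpa using this
  have eC : L (∑' j : ℕ, (L ^ j) (P₂ (N (u (k + 1 + 1 + j)))))
      = ∑' j : ℕ, (L ^ (j + 1)) (P₂ (N (u (k + 1 + (j + 1))))) := by
    rw [ContinuousLinearMap.map_tsum L hsumk1]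
    refine tsum_congr fun j => ?_
    rw [pow_succ']
    have e : k + 1 + 1 + j = k + 1 + (j + 1) := by omega
    rw [e]
    rfl
  rw [eA, eB, eC]
  have eT : (∑' j : ℕ, (L ^ j) (P₂ (N (u (k + 1 + j)))))
      = P₂ (N (u (k + 1))) + ∑' j : ℕ, (L ^ (j + 1)) (P₂ (N (u (k + 1 + (j + 1))))) := by
    rw [Summable.tsum_eq_zero_add hsumk]
    norm_num
  rw [eT]
  have hfix' := hfix (k + 1)
  simp only [chtG] at hfix'
  rw [hfix']
  have hid : P₁ (N (u (k + 1))) + P₂ (N (u (k + 1))) = N (u (k + 1)) :=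
    cht_idsum P₁ P₂ hsum (N (u (k + 1)))
  have hqe : P₂ (N (u (k + 1))) = N (u (k + 1)) - P₁ (N (u (k + 1))) :=
    eq_sub_of_add_eq (by rw [add_comm]; exact hid)
  rw [hqe]
  abel

lemma cht_orbit_fix
    (hsum : P₁ + P₂ = ContinuousLinearMap.id ℝ X)
    (hP₁ : P₁.comp P₁ = P₁) (hP₁₂ : P₁.comp P₂ = 0)
    (hcomm : L.comp P₁ = P₁.comp L)
    (hL'₁ : (L'.comp L).comp P₁ = P₁)
    (hC₂ : 1 ≤ C₂) (hℓ : 0 ≤ ℓ)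
    (hα₂0 : 0 ≤ α₂) (hsα₂ : α₂ < s)
    (hdich₂ : ∀ j : ℕ, ‖(L ^ j).comp P₂‖ ≤ C₂ * α₂ ^ j)
    (hN : ∀ u v : X, ‖N u - N v‖ ≤ ℓ * ‖u - v‖) (hN0 : N 0 = 0)
    (u : ℕ → X) (Mu : ℝ) (hu : ∀ m, ‖u m‖ ≤ Mu * s⁻¹ ^ m)
    (horb : ∀ k, L (u (k + 1)) + N (u (k + 1)) = u k) :
    ∀ k, chtG P₁ P₂ L L' N (u 0) u k = u k := by
  have hs0 : 0 < s := lt_of_le_of_lt hα₂0 hsα₂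
  have hNu := cht_Nbound N ℓ s hℓ hN hN0 u Mu hu
  have hMu0 : 0 ≤ Mu := by
    have := hu 0; simp only [pow_zero, mul_one] at this
    exact le_trans (norm_nonneg _) this
  have hrec : ∀ k, P₁ (u (k + 1)) = L' (P₁ (u k)) - L' (P₁ (N (u (k + 1)))) := by
    intro k
    have h1 : P₁ (u k) = L (P₁ (u (k + 1))) + P₁ (N (u (k + 1))) := by
      rw [← horb k, map_add, cht_lp1 P₁ L hcomm]
    have h2 : L' (P₁ (u k)) = P₁ (u (k + 1)) + L' (P₁ (N (u (k + 1)))) := by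
      rw [h1, map_add, cht_l'l P₁ L L' hL'₁]
    linear_combination (norm := abel) -h2
  have hP1form : ∀ k, P₁ (u k) = (L' ^ k) (P₁ (u 0))
      - ∑ i ∈ Finset.range k, (L' ^ (k - i)) (P₁ (N (u (i + 1)))) := by
    intro k
    induction k with
    | zero => simp
    | succ k ih =>
        rw [hrec k, ih, map_sub, Finset.sum_range_succ]
        have e1 : L' ((L' ^ k) (P₁ (u 0))) = (L' ^ (k + 1)) (P₁ (u 0)) := by
          rw [pow_succ']; rfl
        have e2 : L' (∑ i ∈ Finset.range k, (L' ^ (k - i)) (P₁ (N (u (i + 1)))))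
            = ∑ i ∈ Finset.range k, (L' ^ (k + 1 - i)) (P₁ (N (u (i + 1)))) := by
          rw [map_sum]
          refine Finset.sum_congr rfl fun i hi => ?_
          have hik : i < k := Finset.mem_range.mp hi
          have e : k + 1 - i = (k - i) + 1 := by omega
          rw [e, pow_succ']
          rfl
        have e3 : L' (P₁ (N (u (k + 1)))) = (L' ^ (k + 1 - k)) (P₁ (N (u (k + 1)))) := by
          have e : k + 1 - k = 1 := by omega
          rw [e, pow_one]
        rw [e1, e2, e3]
        abel
  have htel : ∀ k m, P₂ (u k) = (L ^ m) (P₂ (u (k + m)))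
      + ∑ j ∈ Finset.range m, (L ^ j) (P₂ (N (u (k + 1 + j)))) := by
    intro k m
    induction m with
    | zero => simp
    | succ m ih =>
        have h1 : P₂ (u (k + m)) = L (P₂ (u (k + m + 1))) + P₂ (N (u (k + m + 1))) := by
          rw [← horb (k + m), map_add, cht_lp2 P₁ P₂ L hsum hcomm]
        rw [ih, h1, map_add, Finset.sum_range_succ]
        have e1 : (L ^ m) (L (P₂ (u (k + m + 1)))) = (L ^ (m + 1)) (P₂ (u (k + (m + 1)))) := by
          rw [pow_succ]; rfl
        have e2 : (L ^ m) (P₂ (N (u (k + m + 1)))) = (L ^ m) (P₂ (N (u (k + 1 + m)))) := by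
          have e : k + m + 1 = k + 1 + m := by omega
          rw [e]
        rw [e1, e2]
        abel
  have hsumk : ∀ k, Summable (fun j : ℕ => (L ^ j) (P₂ (N (u (k + 1 + j))))) := fun k =>
    (cht_series P₂ L C₂ α₂ s hC₂ hα₂0 hsα₂ hdich₂ (fun m => N (u m)) (ℓ * Mu) hNu k).1
  have hP2form : ∀ k, P₂ (u k) = ∑' j : ℕ, (L ^ j) (P₂ (N (u (k + 1 + j)))) := by
    intro k
    have hg0 : Filter.Tendsto (fun m => (L ^ m) (P₂ (u (k + m)))) Filter.atTop (𝓝 0) := by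
      have hbnd : ∀ m, ‖(L ^ m) (P₂ (u (k + m)))‖
          ≤ (C₂ * Mu * s⁻¹ ^ k) * (α₂ / s) ^ m := by
        intro m
        have h1 := cht_b2 P₂ L C₂ α₂ hdich₂ m (u (k + m))
        have h2 : C₂ * α₂ ^ m * ‖u (k + m)‖ ≤ C₂ * α₂ ^ m * (Mu * s⁻¹ ^ (k + m)) := by
          apply mul_le_mul_of_nonneg_left (hu (k + m))
          have : (0:ℝ) ≤ C₂ := by linarith
          positivity
        have h3 : C₂ * α₂ ^ m * (Mu * s⁻¹ ^ (k + m)) = (C₂ * Mu * s⁻¹ ^ k) * (α₂ / s) ^ m := by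
          rw [pow_add]
          simp only [inv_pow, div_eq_mul_inv, mul_pow]
          ring
        linarith
      have hten : Filter.Tendsto (fun m : ℕ => (C₂ * Mu * s⁻¹ ^ k) * (α₂ / s) ^ m)
          Filter.atTop (𝓝 0) := by
        have hr0 : (0:ℝ) ≤ α₂ / s := by positivity
        have hr1 : α₂ / s < 1 := (div_lt_one hs0).mpr hsα₂
        have h := tendsto_pow_atTop_nhds_zero_of_lt_one hr0 hr1
        have := h.const_mul (C₂ * Mu * s⁻¹ ^ k)
        simpa using this
      exact squeeze_zero_norm hbnd hten
    have hparts : Filter.Tendsto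
        (fun m => ∑ j ∈ Finset.range m, (L ^ j) (P₂ (N (u (k + 1 + j)))))
        Filter.atTop (𝓝 (P₂ (u k))) := by
      have : (fun m => ∑ j ∈ Finset.range m, (L ^ j) (P₂ (N (u (k + 1 + j)))))
          = fun m => P₂ (u k) - (L ^ m) (P₂ (u (k + m))) := by
        funext m
        have := htel k m
        linear_combination (norm := abel) -this
      rw [this]
      simpa using (tendsto_const_nhds.sub hg0)
    have h2 := (hsumk k).hasSum.tendsto_sum_nat
    exact (tendsto_nhds_unique h2 hparts).symm
  intro k
  have e : chtG P₁ P₂ L L' N (u 0) u k = P₁ (u k) + P₂ (u k) := by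
    simp only [chtG]
    rw [← hP1form k, ← hP2form k]
  rw [e, cht_idsum P₁ P₂ hsum]

lemma cht_fix_proj0
    (hP₁ : P₁.comp P₁ = P₁) (hP₁₂ : P₁.comp P₂ = 0)
    (hcomm : L.comp P₁ = P₁.comp L)
    (hC₂ : 1 ≤ C₂) (hℓ : 0 ≤ ℓ)
    (hα₂0 : 0 ≤ α₂) (hsα₂ : α₂ < s)
    (hdich₂ : ∀ j : ℕ, ‖(L ^ j).comp P₂‖ ≤ C₂ * α₂ ^ j)
    (hN : ∀ u v : X, ‖N u - N v‖ ≤ ℓ * ‖u - v‖) (hN0 : N 0 = 0)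
    (ξ : X) (u : ℕ → X) (Mu : ℝ) (hu : ∀ m, ‖u m‖ ≤ Mu * s⁻¹ ^ m)
    (hfix0 : chtG P₁ P₂ L L' N ξ u 0 = u 0) :
    P₁ (u 0) = P₁ ξ := by
  have hNu := cht_Nbound N ℓ s hℓ hN hN0 u Mu hu
  have hs0 := (cht_series P₂ L C₂ α₂ s hC₂ hα₂0 hsα₂ hdich₂
    (fun m => N (u m)) (ℓ * Mu) hNu 0).1
  rw [← hfix0]
  simp only [chtG, Finset.range_zero, Finset.sum_empty, sub_zero, pow_zero]
  rw [map_add]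
  have h1 : P₁ ((1 : X →L[ℝ] X) (P₁ ξ)) = P₁ ξ := by
    simp only [ContinuousLinearMap.one_apply]; exact cht_p11 P₁ hP₁ ξ
  have h2 : P₁ (∑' j : ℕ, (L ^ j) (P₂ (N (u (0 + 1 + j))))) = 0 := by
    rw [ContinuousLinearMap.map_tsum P₁ hs0]
    have h3 : ∀ j : ℕ, P₁ ((L ^ j) (P₂ (N (u (0 + 1 + j))))) = 0 := fun j =>
      cht_p1lpow_p2 P₁ P₂ L hP₁₂ hcomm j _
    rw [tsum_congr h3, tsum_zero]
  rw [h1, h2, add_zero]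

end CHTest

/-- Discrete-time core of Theorem 6.1 of the paper (Chen–Hale–Tan): under the
dichotomy hypotheses (H.1)–(H.4) for `F = L + N`, there is a Lipschitz graph
`W` over `range P₁` which is invariant under `F` and is characterized by the
Lyapunov-exponent bounds of negative semiorbits. -/
theorem chen_hale_tan_graph {X : Type*} [NormedAddCommGroup X] [NormedSpace ℝ X]
    [CompleteSpace X]
    (P₁ P₂ : X →L[ℝ] X)
    (hsum : P₁ + P₂ = ContinuousLinearMap.id ℝ X)
    (hP₁ : P₁.comp P₁ = P₁)
    (hP₁₂ : P₁.comp P₂ = 0)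
    (L L' : X →L[ℝ] X)
    (hcomm : L.comp P₁ = P₁.comp L)
    (hL'₁ : (L'.comp L).comp P₁ = P₁)
    (hL'₂ : (L.comp L').comp P₁ = P₁)
    (hL'₃ : (P₁.comp L').comp P₁ = L'.comp P₁)
    (C₁ C₂ α₁ α₂ : ℝ) (hC₁ : 1 ≤ C₁) (hC₂ : 1 ≤ C₂)
    (hα : α₂ < α₁) (hα₂ : 0 ≤ α₂)
    (hdich₁ : ∀ j : ℕ, ‖(L' ^ j).comp P₁‖ ≤ C₁ * (α₁ ^ j)⁻¹)
    (hdich₂ : ∀ j : ℕ, ‖(L ^ j).comp P₂‖ ≤ C₂ * α₂ ^ j)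
    (N : X → X) (ℓ : ℝ) (hℓ : 0 ≤ ℓ)
    (hN : ∀ u v : X, ‖N u - N v‖ ≤ ℓ * ‖u - v‖) (hN0 : N 0 = 0)
    (γ₁ γ₂ : ℝ) (hγ : γ₂ ≤ γ₁)
    (hγ₂ : α₂ < Real.exp γ₂) (hγ₁ : Real.exp γ₁ < α₁)
    (hgap : ∀ s ∈ Set.Icc (Real.exp γ₂) (Real.exp γ₁),
      (C₁ / (α₁ - s) + C₂ / (s - α₂)) * ℓ < 1) :
    ∃ φ : X → X,
      (∃ K : ℝ, ∀ u ∈ Set.range ⇑P₁, ∀ v ∈ Set.range ⇑P₁,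
        ‖φ u - φ v‖ ≤ K * ‖u - v‖) ∧
      φ 0 = 0 ∧
      (∀ v ∈ Set.range ⇑P₁, φ v ∈ Set.range ⇑P₂) ∧
      (∀ w ∈ {w : X | ∃ v ∈ Set.range ⇑P₁, w = v + φ v},
        L w + N w ∈ {w : X | ∃ v ∈ Set.range ⇑P₁, w = v + φ v}) ∧
      (∀ u ∈ {w : X | ∃ v ∈ Set.range ⇑P₁, w = v + φ v},
        ∃ uk : ℕ → X, uk 0 = u ∧
          (∀ k, uk k ∈ {w : X | ∃ v ∈ Set.range ⇑P₁, w = v + φ v}) ∧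
          (∀ k, L (uk (k + 1)) + N (uk (k + 1)) = uk k) ∧
          (∀ ε : ℝ, 0 < ε → ∃ Cb : ℝ, ∀ k : ℕ,
            ‖uk k‖ ≤ Cb * Real.exp ((-γ₁ + ε) * (k : ℝ)))) ∧
      (∀ uk : ℕ → X,
        (∀ k, L (uk (k + 1)) + N (uk (k + 1)) = uk k) →
        (∀ ε : ℝ, 0 < ε → ∃ Cb : ℝ, ∀ k : ℕ,
          ‖uk k‖ ≤ Cb * Real.exp ((-γ₂ + ε) * (k : ℝ))) →
        ∀ k, uk k ∈ {w : X | ∃ v ∈ Set.range ⇑P₁, w = v + φ v}) := by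
  classical
  set t : ℝ := Real.exp γ₂ with htdef
  set s₁ : ℝ := Real.exp γ₁ with hs₁def
  have hts₁ : t ≤ s₁ := Real.exp_le_exp.mpr hγ
  have htα₂ : α₂ < t := hγ₂
  have htα₁ : t < α₁ := lt_of_le_of_lt hts₁ hγ₁
  have ht0 : 0 < t := Real.exp_pos γ₂
  have hs₁0 : 0 < s₁ := Real.exp_pos γ₁
  have hα₂s₁ : α₂ < s₁ := lt_of_lt_of_le htα₂ hts₁
  have hκ₁ : (C₁ / (α₁ - s₁) + C₂ / (s₁ - α₂)) * ℓ < 1 := hgap s₁ ⟨hts₁, le_refl s₁⟩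
  have hκt : (C₁ / (α₁ - t) + C₂ / (t - α₂)) * ℓ < 1 := hgap t ⟨le_refl t, hts₁⟩
  -- choose `s₂ < t` close enough to `t`
  have hcont : ContinuousAt (fun s : ℝ => (C₁ / (α₁ - s) + C₂ / (s - α₂)) * ℓ) t := by
    have h1 : α₁ - t ≠ 0 := by linarith
    have h2 : t - α₂ ≠ 0 := by linarith
    have c1 : ContinuousAt (fun s : ℝ => C₁ / (α₁ - s)) t :=
      ContinuousAt.div continuousAt_const (continuousAt_const.sub continuousAt_id) h1
    have c2 : ContinuousAt (fun s : ℝ => C₂ / (s - α₂)) t :=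
      ContinuousAt.div continuousAt_const (continuousAt_id.sub continuousAt_const) h2
    exact (c1.add c2).mul continuousAt_const
  have hev : ∀ᶠ s in 𝓝 t,
      ((C₁ / (α₁ - s) + C₂ / (s - α₂)) * ℓ < 1 ∧ α₂ < s ∧ s < α₁) := by
    have h1 : ∀ᶠ s in 𝓝 t, (C₁ / (α₁ - s) + C₂ / (s - α₂)) * ℓ < 1 :=
      hcont.eventually_lt continuousAt_const hκt
    have h2 : ∀ᶠ s in 𝓝 t, α₂ < s := eventually_gt_nhds htα₂
    have h3 : ∀ᶠ s in 𝓝 t, s < α₁ := eventually_lt_nhds htα₁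
    exact h1.and (h2.and h3)
  have hev' : ∀ᶠ s in 𝓝[<] t,
      ((C₁ / (α₁ - s) + C₂ / (s - α₂)) * ℓ < 1 ∧ α₂ < s ∧ s < α₁) :=
    hev.filter_mono nhdsWithin_le_nhds
  obtain ⟨s₂, ⟨hκ₂, hα₂s₂, hs₂α₁⟩, hs₂t⟩ := (hev'.and self_mem_nhdsWithin).exists
  have hs₂0 : 0 < s₂ := lt_of_le_of_lt hα₂ hα₂s₂
  have hs₂s₁ : s₂ ≤ s₁ := le_of_lt (lt_of_lt_of_le hs₂t hts₁)
  have hmono : ∀ k : ℕ, (s₁⁻¹ : ℝ) ^ k ≤ s₂⁻¹ ^ k := fun k =>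
    pow_le_pow_left₀ (inv_nonneg.mpr hs₁0.le) (inv_anti₀ hs₂0 hs₂s₁) k
  set κ₁ : ℝ := (C₁ / (α₁ - s₁) + C₂ / (s₁ - α₂)) * ℓ with hκ₁def
  have hκ₁0 : 0 ≤ κ₁ := by
    have hd1 : (0:ℝ) < α₁ - s₁ := by linarith
    have hd2 : (0:ℝ) < s₁ - α₂ := by linarith
    exact mul_nonneg (add_nonneg (div_nonneg (by linarith) hd1.le)
      (div_nonneg (by linarith) hd2.le)) hℓ
  have h1κ₁ : (0:ℝ) < 1 - κ₁ := by linarith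
  -- the family of fixed points of the Lyapunov–Perron operator, at rate `s₁`
  have hex : ∀ ξ : X, ∃ u : ℕ → X, (∀ k, chtG P₁ P₂ L L' N ξ u k = u k) ∧
      (∀ k, ‖u k‖ ≤ (C₁ * ‖P₁ ξ‖ * (1 - κ₁)⁻¹) * s₁⁻¹ ^ k) := fun ξ =>
    cht_exists P₁ P₂ L L' N C₁ C₂ α₁ α₂ ℓ s₁ hP₁ hC₁ hC₂ hℓ hα₂ hα₂s₁ hγ₁
      hdich₁ hdich₂ hN hN0 hκ₁ ξ
  choose U hUfix hUb using hex
  set E : X → ℝ := fun ξ => C₁ * ‖P₁ ξ‖ * (1 - κ₁)⁻¹ with hEdef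
  have hE0 : ∀ ξ, 0 ≤ E ξ := fun ξ =>
    mul_nonneg (mul_nonneg (by linarith) (norm_nonneg _)) (inv_nonneg.mpr h1κ₁.le)
  have hUb₂ : ∀ ξ k, ‖U ξ k‖ ≤ E ξ * s₂⁻¹ ^ k := fun ξ k =>
    (hUb ξ k).trans (mul_le_mul_of_nonneg_left (hmono k) (hE0 ξ))
  set φ : X → X := fun x => P₂ (U x 0) with hφdef
  have hF1 : ∀ ξ, P₁ (U ξ 0) = P₁ ξ := fun ξ =>
    cht_fix_proj0 P₁ P₂ L L' N C₂ α₂ ℓ s₁ hP₁ hP₁₂ hcomm hC₂ hℓ hα₂ hα₂s₁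
      hdich₂ hN hN0 ξ (U ξ) (E ξ) (hUb ξ) (hUfix ξ 0)
  have hF2 : ∀ ξ, U ξ 0 = P₁ ξ + φ ξ := fun ξ => by
    rw [hφdef]
    rw [← hF1 ξ]
    exact (cht_idsum P₁ P₂ hsum (U ξ 0)).symm
  have hForb : ∀ ξ k, L (U ξ (k + 1)) + N (U ξ (k + 1)) = U ξ k := fun ξ =>
    cht_fix_orbit P₁ P₂ L L' N C₂ α₂ ℓ s₁ hsum hP₁ hP₁₂ hL'₂ hL'₃ hC₂ hℓ hα₂ hα₂s₁
      hdich₂ hN hN0 ξ (U ξ) (E ξ) (hUb ξ) (hUfix ξ)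
  have hrange : ∀ v ∈ Set.range ⇑P₁, P₁ v = v := by
    rintro v ⟨x, hx⟩
    rw [← hx]
    exact cht_p11 P₁ hP₁ x
  -- the membership lemma: any negative semiorbit bounded at rate `s₂` lies on the graph
  have hmem : ∀ (u : ℕ → X) (M : ℝ), (∀ k, L (u (k + 1)) + N (u (k + 1)) = u k) →
      (∀ k, ‖u k‖ ≤ M * s₂⁻¹ ^ k) →
      ∀ k, u k ∈ {w : X | ∃ v ∈ Set.range ⇑P₁, w = v + φ v} := by
    intro u M horb hu k
    have horbw : ∀ m, L (u (k + (m + 1))) + N (u (k + (m + 1))) = u (k + m) := fun m =>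
      horb (k + m)
    have hMw : ∀ m, ‖u (k + m)‖ ≤ (M * s₂⁻¹ ^ k) * s₂⁻¹ ^ m := fun m => by
      have h := hu (k + m)
      calc ‖u (k + m)‖ ≤ M * s₂⁻¹ ^ (k + m) := h
        _ = (M * s₂⁻¹ ^ k) * s₂⁻¹ ^ m := by rw [pow_add]; ring
    have hfixw := cht_orbit_fix P₁ P₂ L L' N C₂ α₂ ℓ s₂ hsum hP₁ hP₁₂ hcomm hL'₁
      hC₂ hℓ hα₂ hα₂s₂ hdich₂ hN hN0 (fun m => u (k + m)) (M * s₂⁻¹ ^ k) hMw horbw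
    have hUbk : ∀ m, ‖U (P₁ (u k)) m‖ ≤ E (P₁ (u k)) * s₂⁻¹ ^ m := hUb₂ _
    have hun := cht_unique P₁ P₂ L L' N C₁ C₂ α₁ α₂ ℓ s₂ hP₁ hC₁ hC₂ hℓ hα₂ hα₂s₂ hs₂α₁
      hdich₁ hdich₂ hN hN0 hκ₂ (u (k + 0)) (P₁ (u k)) (fun m => u (k + m)) (U (P₁ (u k)))
      (M * s₂⁻¹ ^ k) (E (P₁ (u k))) hfixw (hUfix (P₁ (u k))) hMw hUbk 0
    simp only [Nat.add_zero, pow_zero, mul_one] at hun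
    rw [cht_p11 P₁ hP₁ (u k), sub_self, norm_zero, mul_zero, zero_mul] at hun
    have hEq : u k = U (P₁ (u k)) 0 := by
      have h0 := norm_le_zero_iff.mp hun
      exact sub_eq_zero.mp h0
    refine ⟨P₁ (u k), ⟨u k, rfl⟩, ?_⟩
    have h5 := hF2 (P₁ (u k))
    rw [cht_p11 P₁ hP₁ (u k)] at h5
    conv_lhs => rw [hEq]
    exact h5
  refine ⟨φ, ⟨‖P₂‖ * (C₁ * (1 - κ₁)⁻¹), ?_⟩, ?_, ?_, ?_, ?_, ?_⟩
  · -- Lipschitz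
    intro u hu v hv
    have h := cht_unique P₁ P₂ L L' N C₁ C₂ α₁ α₂ ℓ s₁ hP₁ hC₁ hC₂ hℓ hα₂ hα₂s₁ hγ₁
      hdich₁ hdich₂ hN hN0 hκ₁ u v (U u) (U v) (E u) (E v)
      (hUfix u) (hUfix v) (hUb u) (hUb v) 0
    simp only [pow_zero, mul_one] at h
    rw [hrange u hu, hrange v hv] at h
    have h2 : ‖φ u - φ v‖ ≤ ‖P₂‖ * ‖U u 0 - U v 0‖ := by
      rw [hφdef]
      simp only
      rw [← map_sub]
      exact P₂.le_opNorm _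
    calc ‖φ u - φ v‖ ≤ ‖P₂‖ * ‖U u 0 - U v 0‖ := h2
      _ ≤ ‖P₂‖ * (C₁ * ‖u - v‖ * (1 - κ₁)⁻¹) :=
          mul_le_mul_of_nonneg_left h (norm_nonneg _)
      _ = ‖P₂‖ * (C₁ * (1 - κ₁)⁻¹) * ‖u - v‖ := by ring
  · -- φ 0 = 0
    have h := hUb 0 0
    simp only [map_zero, norm_zero, mul_zero, zero_mul, pow_zero, mul_one] at h
    have h0 : U 0 0 = 0 := norm_le_zero_iff.mp h
    rw [hφdef]
    simp only [h0, map_zero]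
  · -- range
    intro v _
    exact ⟨U v 0, rfl⟩
  · -- invariance
    rintro w ⟨v, hv, hw⟩
    have hw0 : U v 0 = w := by rw [hF2 v, hrange v hv, ← hw]
    set seq : ℕ → X := fun k => Nat.rec (L w + N w) (fun m _ => U v m) k with hseq
    have hseq0 : seq 0 = L w + N w := rfl
    have hseqS : ∀ m, seq (m + 1) = U v m := fun m => rfl
    have horbseq : ∀ k, L (seq (k + 1)) + N (seq (k + 1)) = seq k := by
      intro k
      cases k with
      | zero => rw [hseqS 0, hw0, hseq0]
      | succ m => rw [hseqS (m + 1), hseqS m]; exact hForb v m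
    have hbnd : ∀ k, ‖seq k‖ ≤ (max ‖L w + N w‖ (E v * s₂)) * s₂⁻¹ ^ k := by
      intro k
      cases k with
      | zero =>
          rw [hseq0]
          simp only [pow_zero, mul_one]
          exact le_max_left _ _
      | succ m =>
          rw [hseqS m]
          have h1 : ‖U v m‖ ≤ E v * s₂⁻¹ ^ m := hUb₂ v m
          have h2 : E v * s₂⁻¹ ^ m = (E v * s₂) * s₂⁻¹ ^ (m + 1) := by
            rw [pow_succ]
            field_simp
          rw [h2] at h1
          calc ‖U v m‖ ≤ (E v * s₂) * s₂⁻¹ ^ (m + 1) := h1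
            _ ≤ (max ‖L w + N w‖ (E v * s₂)) * s₂⁻¹ ^ (m + 1) := by
                apply mul_le_mul_of_nonneg_right (le_max_right _ _)
                positivity
    have := hmem seq (max ‖L w + N w‖ (E v * s₂)) horbseq hbnd 0
    rw [hseq0] at this
    exact this
  · -- negative semiorbits on the graph
    rintro u ⟨v, hv, hu⟩
    refine ⟨U v, ?_, ?_, hForb v, ?_⟩
    · rw [hF2 v, hrange v hv, ← hu]
    · intro k
      exact hmem (U v) (E v) (hForb v) (hUb₂ v) k
    · intro ε hε
      refine ⟨E v, fun k => ?_⟩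
      have h1 : ‖U v k‖ ≤ E v * s₁⁻¹ ^ k := hUb v k
      have h2 : (s₁⁻¹ : ℝ) ^ k = Real.exp ((-γ₁) * (k : ℝ)) := by
        rw [hs₁def, ← Real.exp_neg, mul_comm, Real.exp_nat_mul]
      have h3 : Real.exp ((-γ₁) * (k : ℝ)) ≤ Real.exp ((-γ₁ + ε) * (k : ℝ)) := by
        apply Real.exp_le_exp.mpr
        have hk0 : (0:ℝ) ≤ (k : ℝ) := Nat.cast_nonneg k
        nlinarith
      calc ‖U v k‖ ≤ E v * s₁⁻¹ ^ k := h1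
        _ = E v * Real.exp ((-γ₁) * (k : ℝ)) := by rw [h2]
        _ ≤ E v * Real.exp ((-γ₁ + ε) * (k : ℝ)) :=
            mul_le_mul_of_nonneg_left h3 (hE0 v)
  · -- converse characterization
    intro uk horb hdec
    set ε₀ : ℝ := γ₂ - Real.log s₂ with hε₀def
    have hε₀ : 0 < ε₀ := by
      have h := (Real.log_lt_iff_lt_exp hs₂0).mpr hs₂t
      rw [hε₀def]
      linarith
    obtain ⟨Cb, hCb⟩ := hdec ε₀ hε₀
    have hbd : ∀ k, ‖uk k‖ ≤ Cb * s₂⁻¹ ^ k := by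
      intro k
      have h := hCb k
      have he : Real.exp ((-γ₂ + ε₀) * (k : ℝ)) = s₂⁻¹ ^ k := by
        have h1 : (-γ₂ + ε₀) = -Real.log s₂ := by rw [hε₀def]; ring
        rw [h1, mul_comm, Real.exp_nat_mul, Real.exp_neg, Real.exp_log hs₂0]
      rw [he] at h
      exact h
    exact fun k => hmem uk Cb horb hbd k
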